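/- The mutation operator M is chaotic according to Devaney on (X_N, d): M is continuous, topologically transitive (for any nonempty open sets U, V there exists k > 0 with M^k(U) ∩ V ≠ ∅), and regular (its periodic points are dense in X_N). -/

import Mathlib

/-- The discrete metric on ℝ: `ddelta x y = 1` if `x ≠ y`, and `0` otherwise. -/
noncomputable def ddelta (x y : ℝ) : ℝ := if x = y then 0 else 1

/-- `Fdel (x₁, x₂) = |x₁| + δ(0, x₂)`. -/
noncomputable def Fdel (x : ℝ × ℝ) : ℝ := |x.1| + ddelta 0 x.2

/-- A single mutation: a position in `{1,…,N}` together with a nucleotide in `{1,2,3,4}`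
(encoded with `Fin N` and `Fin 4`). -/
abbrev Mut (N : ℕ) := Fin N × Fin 4

/-- A mutations sequence: an infinite sequence of mutations. -/
abbrev MutSeq (N : ℕ) := ℕ → Mut N

/-- A genome of size `N`: a sequence of `N` nucleotides in `{1,2,3,4}` (encoded by `Fin 4`,
where `0,1,2,3` stand for the labels `1,2,3,4`, i.e. `A,C,G,T`). -/
abbrev Genome (N : ℕ) := Fin N → Fin 4

/-- The phase space `X_N = {1,2,3,4}^N × S_N`. -/
abbrev Phase (N : ℕ) := Genome N × MutSeq N

/-- A mutation regarded as a pair of real numbers, using the labels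
`1,…,N` for positions and `1,2,3,4` for nucleotides. -/
noncomputable def mutR {N : ℕ} (m : Mut N) : ℝ × ℝ :=
  ((m.1.1 : ℝ) + 1, (m.2.1 : ℝ) + 1)

/-- `d_G(G, Ǧ) = Σ_{k=1}^{N} δ(G_k, Ǧ_k)`, with `δ` the discrete metric. -/
noncomputable def dG {N : ℕ} (G G' : Genome N) : ℝ :=
  ∑ k : Fin N, if G k = G' k then (0 : ℝ) else 1

/-- `d_S(S, Š) = (9/N) Σ_{k=0}^{∞} F(S^k − Š^k)/10^(k+1)`. -/
noncomputable def dS {N : ℕ} (S S' : MutSeq N) : ℝ :=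
  (9 / N) * ∑' k : ℕ, Fdel (mutR (S k) - mutR (S' k)) / 10 ^ (k + 1)

/-- The distance `d((G,S), (Ǧ,Š)) = d_G(G,Ǧ) + d_S(S,Š)` on the phase space. -/
noncomputable def dX {N : ℕ} (X Y : Phase N) : ℝ := dG X.1 Y.1 + dS X.2 Y.2

/-- The mutation operator `M(G, S) = (G', σ(S))`: the nucleotide of `G` at position `(S⁰)₁`
is replaced by the nucleotide `(S⁰)₂`, and the mutations sequence is shifted. -/
noncomputable def Mop {N : ℕ} (X : Phase N) : Phase N :=
  (Function.update X.1 (X.2 0).1 (X.2 0).2, fun k => X.2 (k + 1))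

/-- A set `U ⊆ X_N` is open for the metric `d` if around any of its points it
contains an open ball of positive radius. -/
def IsOpenD {N : ℕ} (U : Set (Phase N)) : Prop :=
  ∀ x ∈ U, ∃ ε > 0, ∀ y, dX x y < ε → y ∈ U


section Aux

variable {N : ℕ}

lemma ddelta_nonneg (x y : ℝ) : 0 ≤ ddelta x y := by
  unfold ddelta; split <;> norm_num

lemma Fdel_nonneg (x : ℝ × ℝ) : 0 ≤ Fdel x :=
  add_nonneg (abs_nonneg _) (ddelta_nonneg _ _)

lemma Fdel_sub_self (m : Mut N) : Fdel (mutR m - mutR m) = 0 := by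
  simp [Fdel, mutR, ddelta]

lemma Fdel_sub_le (m m' : Mut N) : Fdel (mutR m - mutR m') ≤ N := by
  have h1 : (m.1.1 : ℝ) ≤ N - 1 := by
    have := m.1.isLt; have : (m.1.1 : ℝ) + 1 ≤ N := by exact_mod_cast this
    linarith
  have h1' : (m'.1.1 : ℝ) ≤ N - 1 := by
    have := m'.1.isLt; have : (m'.1.1 : ℝ) + 1 ≤ N := by exact_mod_cast this
    linarith
  have habs : |((m.1.1 : ℝ) + 1) - ((m'.1.1 : ℝ) + 1)| ≤ N - 1 := by
    rw [abs_le]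
    constructor <;> [nlinarith [Nat.cast_nonneg (α := ℝ) m.1.1, Nat.cast_nonneg (α := ℝ) m'.1.1];
      nlinarith [Nat.cast_nonneg (α := ℝ) m.1.1, Nat.cast_nonneg (α := ℝ) m'.1.1]]
  have hdel : ddelta 0 (((m.2.1 : ℝ) + 1) - ((m'.2.1 : ℝ) + 1)) ≤ 1 := by
    unfold ddelta; split <;> norm_num
  show |_| + ddelta _ _ ≤ _
  simp only [mutR, Prod.fst_sub, Prod.snd_sub] at *
  linarith

lemma Fdel_sub_ge_one {m m' : Mut N} (h : m ≠ m') : 1 ≤ Fdel (mutR m - mutR m') := by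
  unfold Fdel mutR
  simp only [Prod.fst_sub, Prod.snd_sub]
  rcases eq_or_ne m.1 m'.1 with h1 | h1
  · have h2 : m.2 ≠ m'.2 := fun h2 => h (Prod.ext h1 h2)
    have h2' : (m.2.1 : ℝ) ≠ m'.2.1 := by
      exact_mod_cast fun hc => h2 (Fin.ext hc)
    have : ddelta 0 (((m.2.1 : ℝ) + 1) - ((m'.2.1 : ℝ) + 1)) = 1 := by
      unfold ddelta; rw [if_neg]; intro hc
      apply h2'; linarith
    rw [this]
    have := abs_nonneg (((m.1.1 : ℝ) + 1) - ((m'.1.1 : ℝ) + 1))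
    linarith
  · have h1' : (m.1.1 : ℕ) ≠ m'.1.1 := Fin.val_ne_of_ne h1
    have h2 : ((m.1.1 : ℤ) - m'.1.1) ≠ 0 := sub_ne_zero.mpr (by exact_mod_cast h1')
    have h3 : (1 : ℤ) ≤ |(m.1.1 : ℤ) - m'.1.1| := Int.one_le_abs h2
    have habs : (1 : ℝ) ≤ |(m.1.1 : ℝ) - m'.1.1| := by
      calc (1 : ℝ) ≤ |((m.1.1 : ℤ) - m'.1.1 : ℤ)| := by exact_mod_cast h3
        _ = |(m.1.1 : ℝ) - m'.1.1| := by push_cast; ring_nf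
    have he : ((m.1.1 : ℝ) + 1) - ((m'.1.1 : ℝ) + 1) = (m.1.1 : ℝ) - m'.1.1 := by ring
    have := ddelta_nonneg 0 (((m.2.1 : ℝ) + 1) - ((m'.2.1 : ℝ) + 1))
    rw [he]
    linarith

lemma dterm_nonneg (S S' : MutSeq N) (k : ℕ) :
    0 ≤ Fdel (mutR (S k) - mutR (S' k)) / 10 ^ (k + 1) :=
  div_nonneg (Fdel_nonneg _) (by positivity)

lemma dterm_le (S S' : MutSeq N) (k : ℕ) :
    Fdel (mutR (S k) - mutR (S' k)) / 10 ^ (k + 1) ≤ (N : ℝ) * (1/10) ^ (k+1) := by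
  have hF := Fdel_sub_le (S k) (S' k)
  have he : ((N:ℝ) * (1/10) ^ (k+1)) = (N : ℝ) / 10 ^ (k+1) := by
    rw [div_pow, one_pow, mul_one_div]
  rw [he]
  gcongr

lemma summable_dterm (S S' : MutSeq N) :
    Summable (fun k => Fdel (mutR (S k) - mutR (S' k)) / 10 ^ (k + 1)) := by
  apply Summable.of_nonneg_of_le (dterm_nonneg S S') (dterm_le S S')
  exact ((summable_geometric_of_lt_one (by norm_num) (by norm_num)).mul_left _).comp_injective
    (add_left_injective 1)

end Aux
section Aux2

variable {N : ℕ}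

lemma dS_nonneg (S S' : MutSeq N) : 0 ≤ dS S S' :=
  mul_nonneg (by positivity) (tsum_nonneg (dterm_nonneg S S'))

lemma dG_nonneg (G G' : Genome N) : 0 ≤ dG G G' :=
  Finset.sum_nonneg (fun i _ => by positivity)

lemma dG_self (G : Genome N) : dG G G = 0 := by simp [dG]

lemma genome_eq_of_dG_lt_one {G G' : Genome N} (h : dG G G' < 1) : G = G' := by
  funext p
  by_contra hp
  have h1 : (1:ℝ) ≤ dG G G' := by
    have := Finset.single_le_sum (f := fun k : Fin N => if G k = G' k then (0:ℝ) else 1)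
      (fun i _ => by show (0:ℝ) ≤ (if G i = G' i then (0:ℝ) else 1); split <;> norm_num) (Finset.mem_univ p)
    simpa [dG, if_neg hp] using this
  linarith

lemma dS_le_of_agree {S S' : MutSeq N} (m : ℕ) (h : ∀ j < m, S j = S' j) :
    dS S S' ≤ (1/10) ^ m := by
  have hNpos : (0:ℝ) < N := by exact_mod_cast (S 0).1.pos
  have hsum := summable_dterm S S'
  set f : ℕ → ℝ := fun k => Fdel (mutR (S k) - mutR (S' k)) / 10 ^ (k + 1) with hf
  have hzero : ∀ i ∈ Finset.range m, f i = 0 := by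
    intro i hi
    simp only [hf]
    rw [h i (Finset.mem_range.mp hi), Fdel_sub_self, zero_div]
  have htail : ∑' i, f (i + m) ≤ (N : ℝ) * (1/10)^(m+1) * (1 - 1/10)⁻¹ := by
    have hle : ∀ i, f (i + m) ≤ ((N : ℝ) * (1/10)^(m+1)) * (1/10)^i := by
      intro i
      calc f (i + m) ≤ (N : ℝ) * (1/10) ^ (i + m + 1) := dterm_le S S' (i + m)
        _ = ((N : ℝ) * (1/10)^(m+1)) * (1/10)^i := by
            rw [show i + m + 1 = (m + 1) + i from by ring, pow_add]; ring
    calc ∑' i, f (i + m) ≤ ∑' i, ((N : ℝ) * (1/10)^(m+1)) * (1/10)^i := by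
          apply Summable.tsum_le_tsum hle ((summable_nat_add_iff m).2 hsum)
          exact (summable_geometric_of_lt_one (by norm_num) (by norm_num)).mul_left _
      _ = (N : ℝ) * (1/10)^(m+1) * (1 - 1/10)⁻¹ := by
          rw [tsum_mul_left, tsum_geometric_of_lt_one (by norm_num) (by norm_num)]
  have hts : ∑' k, f k ≤ (N : ℝ) * (1/10)^(m+1) * (1 - 1/10)⁻¹ := by
    rw [← Summable.sum_add_tsum_nat_add m hsum, Finset.sum_eq_zero hzero, zero_add]
    exact htail
  have : dS S S' ≤ (9 / N) * ((N : ℝ) * (1/10)^(m+1) * (1 - 1/10)⁻¹) := by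
    unfold dS
    exact mul_le_mul_of_nonneg_left hts (by positivity)
  refine this.trans (le_of_eq ?_)
  rw [pow_succ]
  field_simp
  ring

lemma dS_ge {S S' : MutSeq N} (j : ℕ) (h : S j ≠ S' j) :
    ((9:ℝ) / N) * (1/10) ^ (j+1) ≤ dS S S' := by
  have hsum := summable_dterm S S'
  have h1 : (1:ℝ) / 10 ^ (j+1) ≤ Fdel (mutR (S j) - mutR (S' j)) / 10 ^ (j + 1) := by
    gcongr
    exact Fdel_sub_ge_one h
  have h2 := Summable.le_tsum hsum j (fun i _ => dterm_nonneg S S' i)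
  unfold dS
  apply mul_le_mul_of_nonneg_left _ (by positivity)
  calc (1/10:ℝ) ^ (j+1) = 1 / 10 ^ (j+1) := by rw [div_pow, one_pow]
    _ ≤ _ := h1.trans h2

lemma dX_le {X Y : Phase N} (m : ℕ) (h1 : X.1 = Y.1) (h2 : ∀ j < m, X.2 j = Y.2 j) :
    dX X Y ≤ (1/10) ^ m := by
  unfold dX
  rw [h1, dG_self, zero_add]
  exact dS_le_of_agree m h2

lemma dX_close {X Y : Phase N} (m : ℕ)
    (h : dX X Y < min 1 (((9:ℝ) / N) * (1/10) ^ (m+1))) :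
    X.1 = Y.1 ∧ ∀ j ≤ m, X.2 j = Y.2 j := by
  have hG : dG X.1 Y.1 < 1 := by
    have := dS_nonneg X.2 Y.2
    have := lt_min_iff.mp h
    unfold dX at this
    linarith [this.1]
  have hS : dS X.2 Y.2 < ((9:ℝ) / N) * (1/10) ^ (m+1) := by
    have := dG_nonneg X.1 Y.1
    have h2 := (lt_min_iff.mp h).2
    unfold dX at h2
    linarith
  refine ⟨genome_eq_of_dG_lt_one hG, fun j hj => ?_⟩
  by_contra hne
  have hge := dS_ge (N := N) j hne
  have hmono : ((1:ℝ)/10) ^ (m+1) ≤ (1/10) ^ (j+1) :=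
    pow_le_pow_of_le_one (by norm_num) (by norm_num) (by omega)
  have : (9 / (N:ℝ)) * (1/10) ^ (m+1) ≤ (9 / N) * (1/10) ^ (j+1) :=
    mul_le_mul_of_nonneg_left hmono (by positivity)
  linarith

end Aux2
section Aux3

variable {N : ℕ}

/-- The genome obtained after applying the first `k` mutations of `S` to `G`. -/
noncomputable def evolve (G : Genome N) (S : MutSeq N) : ℕ → Genome N
  | 0 => G
  | (k+1) => Function.update (evolve G S k) (S k).1 (S k).2

lemma iterate_Mop (X : Phase N) (k : ℕ) :
    (Mop)^[k] X = (evolve X.1 X.2 k, fun j => X.2 (j + k)) := by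
  induction k with
  | zero => simp [evolve]
  | succ k ih =>
    rw [Function.iterate_succ_apply', ih]
    unfold Mop
    refine Prod.ext ?_ ?_
    · show Function.update (evolve X.1 X.2 k) (X.2 (0 + k)).1 (X.2 (0 + k)).2 = evolve X.1 X.2 (k+1)
      rw [zero_add]
      rfl
    · funext j
      show X.2 (j + 1 + k) = X.2 (j + (k + 1))
      have he : j + 1 + k = j + (k + 1) := by omega
      rw [he]

lemma evolve_of_none (G : Genome N) (S : MutSeq N) (k : ℕ) (p : Fin N)
    (h : ∀ i < k, (S i).1 ≠ p) : evolve G S k p = G p := by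
  induction k with
  | zero => rfl
  | succ k ih =>
    show Function.update (evolve G S k) (S k).1 (S k).2 p = G p
    rw [Function.update_of_ne (fun hc => h k (Nat.lt_succ_self k) hc.symm)]
    exact ih (fun i hi => h i (Nat.lt_succ_of_lt hi))

lemma evolve_of_last (G : Genome N) (S : MutSeq N) (k j : ℕ) (p : Fin N)
    (hj : j < k) (hp : (S j).1 = p)
    (hlast : ∀ i, j < i → i < k → (S i).1 ≠ p) : evolve G S k p = (S j).2 := by
  induction k with
  | zero => exact absurd hj (Nat.not_lt_zero j)
  | succ k ih =>
    show Function.update (evolve G S k) (S k).1 (S k).2 p = (S j).2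
    rcases eq_or_lt_of_le (Nat.lt_succ_iff.mp hj) with he | hlt
    · subst he
      rw [hp, Function.update_self]
    · rw [Function.update_of_ne (fun hc => hlast k hlt (Nat.lt_succ_self k) hc.symm)]
      exact ih hlt (fun i h1 h2 => hlast i h1 (Nat.lt_succ_of_lt h2))

end Aux3

/-- A position in `Fin N` obtained from a natural number by reduction mod `N`. -/
def posOf (N : ℕ) (hN : 0 < N) (r : ℕ) : Fin N := ⟨r % N, Nat.mod_lt r hN⟩


/-- The mutation operator `M` is chaotic according to Devaney on `(X_N, d)`:
it is continuous, topologically transitive, and regular (dense periodic points). -/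
theorem Mop_Devaney_chaotic (N : ℕ) (hN : 1 ≤ N) :
    (∀ X : Phase N, ∀ ε > (0 : ℝ), ∃ η > (0 : ℝ),
      ∀ Y : Phase N, dX X Y < η → dX (Mop X) (Mop Y) < ε) ∧
    (∀ U V : Set (Phase N), IsOpenD U → IsOpenD V → U.Nonempty → V.Nonempty →
      ∃ k : ℕ, 0 < k ∧ ((Mop (N := N))^[k] '' U ∩ V).Nonempty) ∧
    (∀ X : Phase N, ∀ ε > (0 : ℝ),
      ∃ Y : Phase N, dX X Y < ε ∧ ∃ n : ℕ, 1 ≤ n ∧ (Mop (N := N))^[n] Y = Y) := by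
  have hN0 : 0 < N := hN
  have hNR : (0:ℝ) < N := by exact_mod_cast hN
  refine ⟨?_, ?_, ?_⟩
  -- Continuity
  · intro X ε hε
    obtain ⟨m, hm⟩ := exists_pow_lt_of_lt_one hε (by norm_num : (1/10:ℝ) < 1)
    refine ⟨min 1 (((9:ℝ)/N) * (1/10)^(m+1+1)), lt_min (by norm_num) (by positivity), ?_⟩
    intro Y hY
    obtain ⟨hG, hS⟩ := dX_close (m+1) hY
    have h1 : (Mop X).1 = (Mop Y).1 := by
      show Function.update X.1 (X.2 0).1 (X.2 0).2 = Function.update Y.1 (Y.2 0).1 (Y.2 0).2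
      rw [hG, hS 0 (by omega)]
    have h2 : ∀ j < m + 1, (Mop X).2 j = (Mop Y).2 j := by
      intro j hj
      show X.2 (j+1) = Y.2 (j+1)
      exact hS (j+1) (by omega)
    calc dX (Mop X) (Mop Y) ≤ (1/10)^(m+1) := dX_le (m+1) h1 h2
      _ ≤ (1/10)^m := pow_le_pow_of_le_one (by norm_num) (by norm_num) (by omega)
      _ < ε := hm
  -- Transitivity
  · rintro U V hU _hV ⟨x, hx⟩ ⟨y, hy⟩
    obtain ⟨εU, hεU, hball⟩ := hU x hx
    obtain ⟨m, hm⟩ := exists_pow_lt_of_lt_one hεU (by norm_num : (1/10:ℝ) < 1)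
    set Zs : MutSeq N := fun j =>
      if j < m then x.2 j
      else if j - m < N then (posOf N hN0 (j - m), y.1 (posOf N hN0 (j - m)))
      else y.2 (j - (m + N)) with hZs
    set Z : Phase N := (x.1, Zs) with hZdef
    have hZU : Z ∈ U := by
      apply hball
      have hle : dX x Z ≤ (1/10)^m := by
        refine dX_le (X := x) (Y := Z) m rfl ?_
        intro j hj
        show x.2 j = Zs j
        simp only [hZs]
        rw [if_pos hj]
      exact lt_of_le_of_lt hle hm
    have hiter : (Mop (N := N))^[m+N] Z = y := by
      rw [iterate_Mop]
      refine Prod.ext ?_ ?_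
      · show evolve x.1 Zs (m+N) = y.1
        funext p
        have hp1 : Zs (m + p.1) = (p, y.1 p) := by
          simp only [hZs]
          rw [if_neg (by omega), if_pos (show m + p.1 - m < N from by have := p.isLt; omega)]
          have hfin : posOf N hN0 (m + p.1 - m) = p := by
            apply Fin.ext
            show (m + p.1 - m) % N = p.1
            have he : m + p.1 - m = p.1 := by omega
            rw [he, Nat.mod_eq_of_lt p.isLt]
          rw [hfin]
        have hlast : ∀ i, m + p.1 < i → i < m + N → (Zs i).1 ≠ p := by
          intro i hi1 hi2
          simp only [hZs]
          rw [if_neg (by omega), if_pos (show i - m < N from by omega)]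
          intro hc
          have hv : (i - m) % N = p.1 := congrArg Fin.val hc
          rw [Nat.mod_eq_of_lt (show i - m < N from by omega)] at hv
          omega
        have := evolve_of_last x.1 Zs (m+N) (m+p.1) p
          (by have := p.isLt; omega) (by rw [hp1]) hlast
        rw [this, hp1]
      · show (fun j => Zs (j + (m + N))) = y.2
        funext j
        simp only [hZs]
        rw [if_neg (by omega), if_neg (by omega)]
        have he : j + (m + N) - (m + N) = j := by omega
        rw [he]
    exact ⟨m + N, by omega, ⟨y, ⟨Z, hZU, hiter⟩, hy⟩⟩
  -- Dense periodic points
  · intro X ε hε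
    obtain ⟨m, hm⟩ := exists_pow_lt_of_lt_one hε (by norm_num : (1/10:ℝ) < 1)
    set n := m + N with hn
    have hnpos : 0 < n := by omega
    set Ts : MutSeq N := fun j =>
      if j % n < m then X.2 (j % n)
      else (posOf N hN0 (j % n - m), X.1 (posOf N hN0 (j % n - m))) with hTs
    refine ⟨(X.1, Ts), ?_, n, by omega, ?_⟩
    · have hle : dX X (X.1, Ts) ≤ (1/10)^m := by
        refine dX_le (X := X) (Y := (X.1, Ts)) m rfl ?_
        intro j hj
        show X.2 j = Ts j
        have hmod : j % n = j := Nat.mod_eq_of_lt (by omega)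
        simp only [hTs]
        rw [if_pos (show j % n < m from by rw [hmod]; exact hj), hmod]
      exact lt_of_le_of_lt hle hm
    · rw [iterate_Mop]
      refine Prod.ext ?_ ?_
      · show evolve X.1 Ts n = X.1
        funext p
        have hlt : m + p.1 < n := by have := p.isLt; omega
        have hmod : (m + p.1) % n = m + p.1 := Nat.mod_eq_of_lt hlt
        have hTval : Ts (m + p.1) = (p, X.1 p) := by
          simp only [hTs]
          rw [if_neg (show ¬ ((m + p.1) % n < m) from by rw [hmod]; omega)]
          have hfin : posOf N hN0 ((m + p.1) % n - m) = p := by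
            apply Fin.ext
            show ((m + p.1) % n - m) % N = p.1
            rw [hmod]
            have he : m + p.1 - m = p.1 := by omega
            rw [he, Nat.mod_eq_of_lt p.isLt]
          rw [hfin]
        have hlast : ∀ i, m + p.1 < i → i < n → (Ts i).1 ≠ p := by
          intro i hi1 hi2
          have hmodi : i % n = i := Nat.mod_eq_of_lt hi2
          simp only [hTs]
          rw [if_neg (show ¬ (i % n < m) from by rw [hmodi]; omega)]
          intro hc
          have hv : (i % n - m) % N = p.1 := congrArg Fin.val hc
          rw [hmodi, Nat.mod_eq_of_lt (show i - m < N from by omega)] at hv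
          omega
        have := evolve_of_last X.1 Ts n (m+p.1) p hlt (by rw [hTval]) hlast
        rw [this, hTval]
      · show (fun j => Ts (j + n)) = Ts
        funext j
        show Ts (j + n) = Ts j
        simp only [hTs]
        rw [Nat.add_mod_right]
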